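/- Let f be a holomorphic generator on 𝔻 with Denjoy–Wolff point a ∈ closure(𝔻), i.e. f(z) = (z − a)(1 − conj(a)·z)·p(z) with p holomorphic and Re p ≥ 0 on 𝔻. Suppose ζ_1, …, ζ_N are pairwise distinct points of ∂𝔻 \ {a} which are boundary regular null points of f with f'(ζ_n) = ∠lim_{z→ζ_n} f(z)/(z − ζ_n) < 0 real. Then there exist a real number r ≥ 0, Möbius (fractional linear) transformations R_1, …, R_N each mapping 𝔻 biholomorphically onto the open right half-plane {w ∈ ℂ : Re w > 0} and whose continuous extension to the closed disk satisfies R_n(ζ_n) = 0, and a holomorphic function q on 𝔻 with Re q ≥ 0, such that, setting g_n(z) = (z − a)(1 − conj(a)·z)·R_n(z) and h(z) = (z − a)(1 − conj(a)·z)·q(z) (also holomorphic generators with Denjoy–Wolff point a), one has 1/f(z) = Σ_{n=1}^{N} 1/g_n(z) + r/h(z) for all z ∈ 𝔻 at which f, all g_n, and h are nonzero. -/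

import Mathlib

open Complex Filter Metric Finset

noncomputable section

/-- The Stolz angle at a boundary point `ζ` with opening parameter `M`. -/
def StolzAngle (ζ : ℂ) (M : ℝ) : Set ℂ :=
  {z : ℂ | ‖z‖ < 1 ∧ ‖ζ - z‖ < M * (1 - ‖z‖)}

/-- Angular (nontangential) limit of `h` at `ζ` equals `L`: within every Stolz
angle `S(ζ, M)`, `M > 1`, the function tends to `L`. -/
def AngularLimit (h : ℂ → ℂ) (ζ : ℂ) (L : ℂ) : Prop :=
  ∀ M : ℝ, 1 < M → Tendsto h (nhdsWithin ζ (StolzAngle ζ M)) (nhds L)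

/-- Angular limit of `h` at `ζ` is `∞`: `|h|` tends to `+∞` within every Stolz angle. -/
def AngularLimitInfty (h : ℂ → ℂ) (ζ : ℂ) : Prop :=
  ∀ M : ℝ, 1 < M → Tendsto (fun z => ‖h z‖) (nhdsWithin ζ (StolzAngle ζ M)) atTop

set_option maxHeartbeats 1600000


lemma memBall_iff_normSq {z : ℂ} : z ∈ ball (0:ℂ) 1 ↔ normSq z < 1 := by
  rw [mem_ball, dist_zero_right, ← Complex.sq_norm]
  constructor
  · intro h; nlinarith [norm_nonneg z]
  · intro h; nlinarith [norm_nonneg z]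

lemma absBall {z : ℂ} (hz : z ∈ ball (0:ℂ) 1) : ‖z‖ < 1 := by
  rwa [mem_ball, dist_zero_right] at hz

lemma onePlusNe {w x : ℂ} (hw : w ∈ ball (0:ℂ) 1) (hx : x ∈ ball (0:ℂ) 1) :
    1 + (starRingEnd ℂ) w * x ≠ 0 := by
  intro h
  have h1 : (starRingEnd ℂ) w * x = -1 := by linear_combination h
  have : ‖(starRingEnd ℂ) w * x‖ = 1 := by rw [h1]; simp
  rw [norm_mul, Complex.norm_conj] at this
  nlinarith [absBall hw, absBall hx, norm_nonneg w, norm_nonneg x]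

lemma oneSubNe {w x : ℂ} (hw : w ∈ ball (0:ℂ) 1) (hx : x ∈ ball (0:ℂ) 1) :
    1 - (starRingEnd ℂ) w * x ≠ 0 := by
  intro h
  have h1 : (starRingEnd ℂ) w * x = 1 := by linear_combination -h
  have : ‖(starRingEnd ℂ) w * x‖ = 1 := by rw [h1]; simp
  rw [norm_mul, Complex.norm_conj] at this
  nlinarith [absBall hw, absBall hx, norm_nonneg w, norm_nonneg x]

lemma normSq_diff (w x : ℂ) :
    normSq (1 + (starRingEnd ℂ) w * x) - normSq (x + w) = (1 - normSq w) * (1 - normSq x) := by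
  simp only [normSq_apply, Complex.add_re, Complex.add_im, Complex.mul_re, Complex.mul_im,
    Complex.conj_re, Complex.conj_im, Complex.one_re, Complex.one_im]
  ring

lemma normSq_diff' (w x : ℂ) :
    normSq (1 - (starRingEnd ℂ) w * x) - normSq (x - w) = (1 - normSq w) * (1 - normSq x) := by
  simp only [normSq_apply, Complex.sub_re, Complex.sub_im, Complex.mul_re, Complex.mul_im,
    Complex.conj_re, Complex.conj_im, Complex.one_re, Complex.one_im]
  ring

lemma rhpDenNe {u v : ℂ} (hu : 0 < u.re) (hv : 0 < v.re) : u + (starRingEnd ℂ) v ≠ 0 := by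
  intro h
  have : (u + (starRingEnd ℂ) v).re = 0 := by rw [h]; simp
  simp only [Complex.add_re, Complex.conj_re] at this
  linarith

theorem schwarzPickRHP (P : ℂ → ℂ) (hd : DifferentiableOn ℂ P (ball (0:ℂ) 1))
    (hre : ∀ x ∈ ball (0:ℂ) 1, 0 < (P x).re) {z w : ℂ}
    (hz : z ∈ ball (0:ℂ) 1) (hw : w ∈ ball (0:ℂ) 1) :
    ‖P z - P w‖ * ‖1 - (starRingEnd ℂ) w * z‖
      ≤ ‖z - w‖ * ‖P z + (starRingEnd ℂ) (P w)‖ := by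
  have hPw := hre w hw
  set φ : ℂ → ℂ := fun x => (x + w) / (1 + (starRingEnd ℂ) w * x) with hφ
  have hφmem : ∀ x ∈ ball (0:ℂ) 1, φ x ∈ ball (0:ℂ) 1 := by
    intro x hx
    have hne := onePlusNe hw hx
    rw [memBall_iff_normSq, hφ, normSq_div, div_lt_one (normSq_pos.2 hne)]
    have := normSq_diff w x
    have h1 : normSq x < 1 := memBall_iff_normSq.1 hx
    have h2 : normSq w < 1 := memBall_iff_normSq.1 hw
    nlinarith
  have hψmem : ∀ u : ℂ, 0 < u.re →
      (u - P w) / (u + (starRingEnd ℂ) (P w)) ∈ ball (0:ℂ) 1 := by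
    intro u hu
    have hne := rhpDenNe hu hPw
    rw [memBall_iff_normSq, normSq_div, div_lt_one (normSq_pos.2 hne)]
    have key : normSq (u + (starRingEnd ℂ) (P w)) - normSq (u - P w) = 4 * u.re * (P w).re := by
      simp only [normSq_apply, Complex.add_re, Complex.add_im, Complex.sub_re, Complex.sub_im,
        Complex.conj_re, Complex.conj_im]
      ring
    nlinarith
  set h : ℂ → ℂ := fun x => (P (φ x) - P w) / (P (φ x) + (starRingEnd ℂ) (P w)) with hh
  have hmaps : Set.MapsTo h (ball (0:ℂ) 1) (ball (0:ℂ) 1) := fun x hx =>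
    hψmem _ (hre _ (hφmem x hx))
  have hh0 : h 0 = 0 := by
    have h1 : φ 0 = w := by simp [hφ]
    simp [hh, h1]
  have hφd : DifferentiableOn ℂ φ (ball (0:ℂ) 1) := by
    rw [hφ]
    exact DifferentiableOn.div
      ((differentiable_id.add_const _).differentiableOn)
      ((differentiable_const _).differentiableOn.mul differentiable_id.differentiableOn |>.const_add 1)
      (fun x hx => onePlusNe hw hx)
  have hPφ : DifferentiableOn ℂ (fun x => P (φ x)) (ball (0:ℂ) 1) := hd.comp hφd hφmem
  have hhd : DifferentiableOn ℂ h (ball (0:ℂ) 1) :=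
    DifferentiableOn.div (hPφ.sub (differentiableOn_const _))
      (hPφ.add (differentiableOn_const _))
      (fun x hx => rhpDenNe (hre _ (hφmem x hx)) hPw)
  have schwarz : ∀ x ∈ ball (0:ℂ) 1, ‖h x‖ ≤ ‖x‖ := by
    intro x hx
    have hm2 : Set.MapsTo h (ball (0:ℂ) 1) (ball (h 0) 1) := by rw [hh0]; exact hmaps
    have := Complex.dist_le_div_mul_dist_of_mapsTo_ball (R₁ := 1) (R₂ := 1) hhd (hm2.mono_right ball_subset_closedBall) hx
    simpa [hh0, dist_zero_right] using this
  have hne1 : (1 : ℂ) - (starRingEnd ℂ) w * z ≠ 0 := oneSubNe hw hz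
  set x : ℂ := (z - w) / (1 - (starRingEnd ℂ) w * z) with hx
  have hxball : x ∈ ball (0:ℂ) 1 := by
    rw [memBall_iff_normSq, hx, normSq_div, div_lt_one (normSq_pos.2 hne1)]
    have := normSq_diff' w z
    have h1 : normSq z < 1 := memBall_iff_normSq.1 hz
    have h2 : normSq w < 1 := memBall_iff_normSq.1 hw
    nlinarith
  have hxd : x * (1 - (starRingEnd ℂ) w * z) = z - w := div_mul_cancel₀ _ hne1
  have key : x + w = z * (1 + (starRingEnd ℂ) w * x) := by linear_combination hxd
  have hφx : φ x = z := by
    rw [hφ]; show (x + w) / (1 + (starRingEnd ℂ) w * x) = z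
    rw [key, mul_div_assoc, div_self (onePlusNe hw hxball), mul_one]
  have hsch := schwarz x hxball
  rw [hh] at hsch
  simp only [hφx] at hsch
  rw [hx, norm_div, norm_div] at hsch
  have d1 : 0 < ‖P z + (starRingEnd ℂ) (P w)‖ :=
    norm_pos_iff.mpr (rhpDenNe (hre z hz) hPw)
  have d2 : 0 < ‖1 - (starRingEnd ℂ) w * z‖ := norm_pos_iff.mpr hne1
  rw [div_le_div_iff₀ d1 d2] at hsch
  linarith

lemma juliaAlg (r : ℝ) (z ζ Z U : ℂ) (h : normSq ζ = 1) :
    (1-r) * (normSq (z - (r:ℂ)*ζ) * normSq (Z + (starRingEnd ℂ) U)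
      - normSq (1 - (r:ℂ)*(starRingEnd ℂ) ζ*z) * normSq (Z - U))
    = -(1-r)*(1-r^2)*(1-normSq z)*normSq Z
      - (1+r)*(1-normSq z)*normSq (((1-r:ℝ):ℂ)*U)
      + 2*normSq (z - (r:ℂ)*ζ)*(Z*(((1-r:ℝ):ℂ)*U)).re
      + 2*normSq (1 - (r:ℂ)*(starRingEnd ℂ) ζ*z)*(Z*(starRingEnd ℂ) (((1-r:ℝ):ℂ)*U)).re := by
  have h' : ζ.re*ζ.re + ζ.im*ζ.im = 1 := by simpa [normSq_apply] using h
  simp only [normSq_apply, Complex.mul_re, Complex.mul_im, Complex.sub_re, Complex.sub_im,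
    Complex.add_re, Complex.add_im, Complex.conj_re, Complex.conj_im, Complex.one_re,
    Complex.one_im, Complex.ofReal_re, Complex.ofReal_im, map_mul]
  ring_nf
  linear_combination ((1-r)*(1-(z.re^2+z.im^2))*r^2*(Z.re^2+Z.im^2+U.re^2+U.im^2)) * h'

lemma IooMem : Set.Ioo (0:ℝ) 1 ∈ nhdsWithin (1:ℝ) (Set.Iio 1) :=
  Ioo_mem_nhdsLT_of_mem ⟨zero_lt_one, le_rfl⟩

lemma memBall_iff_normSq' {z : ℂ} : z ∈ ball (0:ℂ) 1 ↔ normSq z < 1 := by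
  rw [mem_ball, dist_zero_right, ← Complex.sq_norm]
  constructor
  · intro h; nlinarith [norm_nonneg z]
  · intro h; nlinarith [norm_nonneg z]

theorem juliaRHP (P : ℂ → ℂ) (hd : DifferentiableOn ℂ P (ball (0:ℂ) 1))
    (hre : ∀ x ∈ ball (0:ℂ) 1, 0 < (P x).re) (ζ : ℂ) (hζ : normSq ζ = 1)
    (σ : ℝ) (hσ : 0 < σ)
    (hlim : Tendsto (fun r : ℝ => ((1 - r : ℂ)/(1 + r)) * P ((r:ℂ)*ζ))
      (nhdsWithin (1:ℝ) (Set.Iio 1)) (nhds ((σ:ℝ):ℂ)))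
    {z : ℂ} (hz : z ∈ ball (0:ℂ) 1) :
    σ * (1 - normSq z) ≤ (P z).re * normSq (ζ - z) := by
  set l := nhdsWithin (1:ℝ) (Set.Iio 1)
  set u : ℝ → ℂ := fun r => P ((r:ℂ)*ζ) with hu
  set v : ℝ → ℂ := fun r => ((1-r:ℝ):ℂ) * u r with hv
  have hmem : ∀ r ∈ Set.Ioo (0:ℝ) 1, (r:ℂ)*ζ ∈ ball (0:ℂ) 1 := by
    intro r hr
    rw [memBall_iff_normSq', normSq_mul, normSq_ofReal, hζ, mul_one]
    nlinarith [hr.1, hr.2]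
  -- limit of v
  have hone : Tendsto (fun r : ℝ => (1:ℂ)+(r:ℂ)) l (nhds 2) := by
    have h1 : Tendsto (fun r : ℝ => (1:ℂ)+(r:ℂ)) (nhds (1:ℝ)) (nhds ((1:ℂ)+((1:ℝ):ℂ))) :=
      (continuous_const.add Complex.continuous_ofReal).tendsto 1
    have h2 := h1.mono_left (nhdsWithin_le_nhds : l ≤ nhds 1)
    norm_num at h2
    exact h2
  have hvlim : Tendsto v l (nhds (((2*σ:ℝ)):ℂ)) := by
    have h2 : Tendsto (fun r : ℝ => ((1:ℂ)+(r:ℂ)) * (((1 - r : ℂ)/(1 + r)) * u r)) l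
        (nhds (2 * ((σ:ℝ):ℂ))) := hone.mul hlim
    have : (fun r : ℝ => ((1:ℂ)+(r:ℂ)) * (((1 - r : ℂ)/(1 + r)) * u r)) =ᶠ[l] v := by
      filter_upwards [IooMem] with r hr
      have hner : (1+r:ℝ) ≠ 0 := by nlinarith [hr.1]
      have hne : (1:ℂ) + (r:ℂ) ≠ 0 := by
        rw [show (1:ℂ)+(r:ℂ) = ((1+r:ℝ):ℂ) by push_cast; ring]
        exact_mod_cast hner
      rw [hv]
      simp only
      push_cast
      field_simp
    rw [show (((2*σ:ℝ)):ℂ) = 2 * ((σ:ℝ):ℂ) by push_cast; ring]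
    exact Tendsto.congr' this h2
  -- the nonnegative quantity
  set F : ℝ → ℝ := fun r => (1-r) * (normSq (z - (r:ℂ)*ζ) * normSq (P z + (starRingEnd ℂ) (u r))
      - normSq (1 - (r:ℂ)*(starRingEnd ℂ) ζ*z) * normSq (P z - u r)) with hF
  have hF0 : ∀ᶠ r in l, 0 ≤ F r := by
    filter_upwards [IooMem] with r hr
    have hw : (r:ℂ)*ζ ∈ ball (0:ℂ) 1 := hmem r hr
    have hsp := schwarzPickRHP P hd hre hz hw
    have hconj : (starRingEnd ℂ) ((r:ℂ)*ζ) = (r:ℂ)*(starRingEnd ℂ) ζ := by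
      rw [map_mul, Complex.conj_ofReal]
    rw [hconj] at hsp
    have h1 : (‖P z - u r‖ * ‖1 - (r:ℂ)*(starRingEnd ℂ) ζ * z‖)^2
        ≤ (‖z - (r:ℂ)*ζ‖ * ‖P z + (starRingEnd ℂ) (u r)‖)^2 := by
      apply pow_le_pow_left₀ (by positivity) hsp
    rw [mul_pow, mul_pow, Complex.sq_norm, Complex.sq_norm, Complex.sq_norm, Complex.sq_norm] at h1
    rw [hF]
    simp only [hu]
    have hr2 : (0:ℝ) ≤ 1 - r := by linarith [hr.2]
    nlinarith [h1]
  -- identity F r = E (r, v r)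
  have hFeq : ∀ r : ℝ, F r =
      -(1-r)*(1-r^2)*(1-normSq z)*normSq (P z)
      - (1+r)*(1-normSq z)*normSq (v r)
      + 2*normSq (z - (r:ℂ)*ζ)*((P z)*(v r)).re
      + 2*normSq (1 - (r:ℂ)*(starRingEnd ℂ) ζ*z)*((P z)*(starRingEnd ℂ) (v r)).re := by
    intro r
    exact juliaAlg r z ζ (P z) (u r) hζ
  -- limit of F
  have hr1 : Tendsto (fun r : ℝ => r) l (nhds 1) := tendsto_id.mono_left nhdsWithin_le_nhds
  have hrC : Tendsto (fun r : ℝ => ((r:ℝ):ℂ)) l (nhds ((1:ℝ):ℂ)) :=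
    (Complex.continuous_ofReal.tendsto _).comp hr1
  set L : ℝ := -2*(1-normSq z)*normSq (((2*σ:ℝ)):ℂ)
      + 2*normSq (z - ζ)*((P z)*(((2*σ:ℝ)):ℂ)).re
      + 2*normSq (1 - (starRingEnd ℂ) ζ*z)*((P z)*(starRingEnd ℂ) (((2*σ:ℝ)):ℂ)).re with hL
  have hFlim : Tendsto F l (nhds L) := by
    rw [funext hFeq]
    have t1 : Tendsto (fun r : ℝ => -(1-r)*(1-r^2)*(1-normSq z)*normSq (P z)) l
        (nhds (-(1-1)*(1-1^2)*(1-normSq z)*normSq (P z))) := by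
      apply Tendsto.mul_const; apply Tendsto.mul_const
      exact ((continuous_const.sub continuous_id).neg.mul
        (continuous_const.sub (continuous_pow 2))).continuousAt.tendsto.comp hr1
    have t2 : Tendsto (fun r : ℝ => (1+r)*(1-normSq z)*normSq (v r)) l
        (nhds ((1+1)*(1-normSq z)*normSq (((2*σ:ℝ)):ℂ))) := by
      apply Tendsto.mul
      · apply Tendsto.mul_const
        exact (continuous_const.add continuous_id).continuousAt.tendsto.comp hr1
      · exact (Complex.continuous_normSq.tendsto _).comp hvlim
    have t3 : Tendsto (fun r : ℝ => 2*normSq (z - (r:ℂ)*ζ)*((P z)*(v r)).re) l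
        (nhds (2*normSq (z - ζ)*((P z)*(((2*σ:ℝ)):ℂ)).re)) := by
      apply Tendsto.mul
      · apply Tendsto.const_mul
        have : Tendsto (fun r : ℝ => z - (r:ℂ)*ζ) l (nhds (z - ζ)) := by
          have := (tendsto_const_nhds (x := z)).sub (hrC.mul_const ζ)
          simpa using this
        exact (Complex.continuous_normSq.tendsto _).comp this
      · exact (Complex.continuous_re.tendsto _).comp ((tendsto_const_nhds).mul hvlim)
    have t4 : Tendsto (fun r : ℝ => 2*normSq (1 - (r:ℂ)*(starRingEnd ℂ) ζ*z)*((P z)*(starRingEnd ℂ) (v r)).re) l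
        (nhds (2*normSq (1 - (starRingEnd ℂ) ζ*z)*((P z)*(starRingEnd ℂ) (((2*σ:ℝ)):ℂ)).re)) := by
      apply Tendsto.mul
      · apply Tendsto.const_mul
        have : Tendsto (fun r : ℝ => 1 - (r:ℂ)*(starRingEnd ℂ) ζ*z) l
            (nhds (1 - (starRingEnd ℂ) ζ*z)) := by
          have := (tendsto_const_nhds (x := (1:ℂ))).sub ((hrC.mul_const ((starRingEnd ℂ) ζ)).mul_const z)
          simpa using this
        exact (Complex.continuous_normSq.tendsto _).comp this
      · exact (Complex.continuous_re.tendsto _).comp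
          ((tendsto_const_nhds).mul ((Complex.continuous_conj.tendsto _).comp hvlim))
    have := ((t1.sub t2).add t3).add t4
    convert this using 1
    rw [hL]; ring
  have hL0 : 0 ≤ L := ge_of_tendsto hFlim hF0
  -- simplify L
  have hre2 : ((P z)*(((2*σ:ℝ)):ℂ)).re = (P z).re * (2*σ) := by
    rw [mul_comm, Complex.re_ofReal_mul]; ring
  have hconj2 : (starRingEnd ℂ) (((2*σ:ℝ)):ℂ) = (((2*σ:ℝ)):ℂ) := Complex.conj_ofReal _
  have hnsq1 : normSq (z - ζ) = normSq (ζ - z) := by rw [← neg_sub, normSq_neg]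
  have hnsq2 : normSq (1 - (starRingEnd ℂ) ζ*z) = normSq (ζ - z) := by
    have : 1 - (starRingEnd ℂ) ζ*z = (starRingEnd ℂ) ζ * (ζ - z) := by
      have hcm : (starRingEnd ℂ) ζ * ζ = 1 := by
        rw [mul_comm, Complex.mul_conj, hζ]; simp
      linear_combination -hcm
    rw [this, normSq_mul, normSq_conj, hζ, one_mul]
  rw [hL, hre2, hconj2, hre2, hnsq1, hnsq2, Complex.normSq_ofReal] at hL0
  nlinarith

lemma unitSubNe {ζ z : ℂ} (hζ : ‖ζ‖ = 1) (hz : z ∈ ball (0:ℂ) 1) : ζ - z ≠ 0 := by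
  intro h
  have h1 : ζ = z := by linear_combination h
  rw [h1] at hζ
  linarith [absBall hz]

lemma unitAddNe {ζ z : ℂ} (hζ : ‖ζ‖ = 1) (hz : z ∈ ball (0:ℂ) 1) : ζ + z ≠ 0 := by
  intro h
  have h1 : ζ = -z := by linear_combination h
  rw [h1] at hζ
  simp only [norm_neg] at hζ
  linarith [absBall hz]

lemma reK (ζ z : ℂ) (h : normSq ζ = 1) :
    ((ζ + z)/(ζ - z)).re = (1 - normSq z)/normSq (ζ - z) := by
  by_cases hne : ζ - z = 0
  · rw [hne]; simp
  · rw [Complex.div_re, ← add_div]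
    congr 1
    have h' : ζ.re*ζ.re + ζ.im*ζ.im = 1 := by simpa [normSq_apply] using h
    simp only [normSq_apply, Complex.add_re, Complex.add_im, Complex.sub_re, Complex.sub_im]
    linear_combination h'

lemma reK' (ζ z : ℂ) (h : normSq ζ = 1) :
    ((ζ - z)/(ζ + z)).re = (1 - normSq z)/normSq (ζ + z) := by
  have := reK ζ (-z) h
  rw [← sub_eq_add_neg, sub_neg_eq_add, normSq_neg] at this
  exact this

lemma mobiusBij (ζ : ℂ) (hζ : ‖ζ‖ = 1) (σ : ℝ) (hσ : 0 < σ) :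
    Set.BijOn (fun z => (ζ - z)/(((σ:ℝ):ℂ)*(ζ + z))) (ball (0:ℂ) 1) {w : ℂ | 0 < w.re} := by
  have hζsq : normSq ζ = 1 := by rw [← Complex.sq_norm, hζ]; norm_num
  have hζ0 : ζ ≠ 0 := by intro h; rw [h] at hζ; simp at hζ
  have hσC : ((σ:ℝ):ℂ) ≠ 0 := by exact_mod_cast hσ.ne'
  refine ⟨?_, ?_, ?_⟩
  · -- MapsTo
    intro z hz
    have hadd := unitAddNe hζ hz
    have hz1 : normSq z < 1 := memBall_iff_normSq.1 hz
    show 0 < ((ζ - z)/(((σ:ℝ):ℂ)*(ζ + z))).re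
    have he : (ζ - z)/(((σ:ℝ):ℂ)*(ζ + z)) = (((σ⁻¹:ℝ)):ℂ) * ((ζ - z)/(ζ + z)) := by
      rw [Complex.ofReal_inv]
      field_simp
    rw [he, Complex.re_ofReal_mul, reK' ζ z hζsq]
    have h2 := normSq_pos.2 hadd
    have h1z : 0 < 1 - normSq z := by linarith
    positivity
  · -- InjOn
    intro z1 h1 z2 h2 heq
    simp only at heq
    have ha1 := unitAddNe hζ h1
    have ha2 := unitAddNe hζ h2
    rw [div_eq_div_iff (mul_ne_zero hσC ha1) (mul_ne_zero hσC ha2)] at heq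
    have h3 : ((σ:ℝ):ℂ) * (2*ζ) * (z2 - z1) = 0 := by linear_combination heq
    rcases mul_eq_zero.1 h3 with h | h
    · rcases mul_eq_zero.1 h with h' | h'
      · exact absurd h' hσC
      · exact absurd h' (by simpa using hζ0)
    · linear_combination -h
  · -- SurjOn
    intro w hw
    have hwre : 0 < w.re := hw
    have hden : (1:ℂ) + ((σ:ℝ):ℂ)*w ≠ 0 := by
      intro h
      have : ((1:ℂ) + ((σ:ℝ):ℂ)*w).re = 0 := by rw [h]; simp
      simp only [Complex.add_re, Complex.one_re, Complex.re_ofReal_mul] at this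
      nlinarith
    set z : ℂ := (ζ*(1-((σ:ℝ):ℂ)*w))/(1+((σ:ℝ):ℂ)*w) with hzdef
    have hkey : normSq (1+((σ:ℝ):ℂ)*w) - normSq (1-((σ:ℝ):ℂ)*w) = 4*σ*w.re := by
      simp only [normSq_apply, Complex.add_re, Complex.add_im, Complex.sub_re, Complex.sub_im,
        Complex.mul_re, Complex.mul_im, Complex.one_re, Complex.one_im, Complex.ofReal_re,
        Complex.ofReal_im]
      ring
    have hzball : z ∈ ball (0:ℂ) 1 := by
      rw [memBall_iff_normSq, hzdef, normSq_div, normSq_mul, hζsq, one_mul,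
        div_lt_one (normSq_pos.2 hden)]
      nlinarith [normSq_nonneg (1-((σ:ℝ):ℂ)*w)]
    refine ⟨z, hzball, ?_⟩
    have hzd : z * (1+((σ:ℝ):ℂ)*w) = ζ*(1-((σ:ℝ):ℂ)*w) := div_mul_cancel₀ _ hden
    show (ζ - z)/(((σ:ℝ):ℂ)*(ζ + z)) = w
    rw [div_eq_iff (mul_ne_zero hσC (unitAddNe hζ hzball))]
    linear_combination -hzd

theorem constOfReZero (g : ℂ → ℂ) (hd : DifferentiableOn ℂ g (ball (0:ℂ) 1))
    (hre : ∀ z ∈ ball (0:ℂ) 1, 0 ≤ (g z).re) (z₀ : ℂ) (hz₀ : z₀ ∈ ball (0:ℂ) 1)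
    (h0 : (g z₀).re = 0) : ∀ z ∈ ball (0:ℂ) 1, g z = g z₀ := by
  set G : ℂ → ℂ := fun z => Complex.exp (-g z) with hG
  have hGd : DifferentiableOn ℂ G (ball (0:ℂ) 1) := (hd.neg).cexp
  have hmax : IsMaxOn (norm ∘ G) (ball (0:ℂ) 1) z₀ := by
    intro z hz
    simp only [Function.comp, hG, Complex.norm_exp, neg_re, h0, neg_zero,
      Real.exp_zero]
    exact Real.exp_le_one_iff.2 (by linarith [hre z hz])
  have heq := Complex.eqOn_of_isPreconnected_of_isMaxOn_norm
    (convex_ball (0:ℂ) 1).isPreconnected isOpen_ball hGd hz₀ hmax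
  -- deriv of g vanishes
  have hderiv : ∀ z ∈ ball (0:ℂ) 1, HasDerivAt g 0 z := by
    intro z hz
    have hgz : DifferentiableAt ℂ g z := hd.differentiableAt (isOpen_ball.mem_nhds hz)
    have hGz : HasDerivAt G (Complex.exp (-g z) * (-deriv g z)) z := by
      simpa [hG, Function.comp_def] using (Complex.hasDerivAt_exp (-g z)).comp z (hgz.hasDerivAt.neg)
    have hGz' : deriv G z = 0 := by
      have : G =ᶠ[nhds z] fun _ => G z₀ := by
        filter_upwards [isOpen_ball.mem_nhds hz] with w hw using heq hw
      rw [this.deriv_eq]; exact deriv_const _ _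
    have := hGz.deriv
    rw [hGz'] at this
    have hz0 : deriv g z = 0 := by
      rcases mul_eq_zero.1 this.symm with h | h
      · exact absurd h (Complex.exp_ne_zero _)
      · simpa using h
    simpa [hz0] using hgz.hasDerivAt
  intro z hz
  refine (convex_ball (0:ℂ) 1).is_const_of_fderivWithin_eq_zero hd ?_ hz hz₀
  intro x hx
  rw [fderivWithin_of_isOpen isOpen_ball hx]
  have h := (hderiv x hx).hasFDerivAt.fderiv
  rw [h]; ext y; simp

/-- Theorem `t.general`: separation of boundary singularities for
a generator with arbitrary Denjoy–Wolff point `a` in the closed disk. -/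
theorem stmt6 (N : ℕ) (a : ℂ) (ha : ‖a‖ ≤ 1)
    (p f : ℂ → ℂ)
    (hp : DifferentiableOn ℂ p (ball (0:ℂ) 1))
    (hre : ∀ z ∈ ball (0:ℂ) 1, 0 ≤ (p z).re)
    (hf : ∀ z, f z = (z - a) * (1 - (starRingEnd ℂ) a * z) * p z)
    (ζ : Fin N → ℂ) (hinj : Function.Injective ζ)
    (hζ : ∀ n, ‖ζ n‖ = 1) (hζa : ∀ n, ζ n ≠ a)
    (m : Fin N → ℝ) (hm : ∀ n, m n < 0)
    (hder : ∀ n, AngularLimit (fun z => f z / (z - ζ n)) (ζ n) ((m n : ℝ) : ℂ)) :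
    ∃ (r : ℝ) (R : Fin N → ℂ → ℂ) (q : ℂ → ℂ), 0 ≤ r ∧
      (∀ n, ∃ α β γ δ : ℂ, α * δ - β * γ ≠ 0 ∧ γ * ζ n + δ ≠ 0 ∧
        (∀ z, R n z = (α * z + β) / (γ * z + δ)) ∧ R n (ζ n) = 0) ∧
      (∀ n, Set.BijOn (R n) (ball (0:ℂ) 1) {w : ℂ | 0 < w.re}) ∧
      DifferentiableOn ℂ q (ball (0:ℂ) 1) ∧
      (∀ z ∈ ball (0:ℂ) 1, 0 ≤ (q z).re) ∧
      ∀ z ∈ ball (0:ℂ) 1, f z ≠ 0 →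
        (∀ n, (z - a) * (1 - (starRingEnd ℂ) a * z) * R n z ≠ 0) →
        (z - a) * (1 - (starRingEnd ℂ) a * z) * q z ≠ 0 →
        1 / f z =
          (∑ n, 1 / ((z - a) * (1 - (starRingEnd ℂ) a * z) * R n z))
            + (r : ℂ) / ((z - a) * (1 - (starRingEnd ℂ) a * z) * q z) := by
  obtain hN | hN := Nat.eq_zero_or_pos N
  · subst hN
    refine ⟨1, fun i => i.elim0, p, zero_le_one, fun i => i.elim0, fun i => i.elim0,
      hp, hre, ?_⟩
    intro z hz hfz hR hq
    rw [hf z]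
    simp
  -- main case
  set l := nhdsWithin (1:ℝ) (Set.Iio (1:ℝ)) with hldef
  have hζsq : ∀ n, normSq (ζ n) = 1 := by
    intro n; rw [← Complex.sq_norm, hζ n]; norm_num
  have hζ0 : ∀ n, ζ n ≠ 0 := by
    intro n h; have := hζ n; rw [h] at this; simp at this
  have hζa' : ∀ n, ζ n - a ≠ 0 := fun n h => hζa n (by linear_combination h)
  have hnsa : ∀ n, 0 < normSq (ζ n - a) := fun n => normSq_pos.2 (hζa' n)
  have hrC : Tendsto (fun r : ℝ => ((r:ℝ):ℂ)) l (nhds ((1:ℝ):ℂ)) :=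
    (Complex.continuous_ofReal.tendsto _).comp (tendsto_id.mono_left nhdsWithin_le_nhds)
  have honel : Tendsto (fun r : ℝ => (1:ℂ)+((r:ℝ):ℂ)) l (nhds 2) := by
    have h2 := (tendsto_const_nhds (x := (1:ℂ))).add hrC
    norm_num at h2; exact h2
  -- radial path into Stolz angle
  have hpath : ∀ n, Tendsto (fun r : ℝ => ((r:ℝ):ℂ)*ζ n) l
      (nhdsWithin (ζ n) (StolzAngle (ζ n) 2)) := by
    intro n
    rw [tendsto_nhdsWithin_iff]
    constructor
    · have := hrC.mul_const (ζ n)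
      simpa using this
    · filter_upwards [IooMem] with r hr
      constructor
      · rw [norm_mul, Complex.norm_real, Real.norm_eq_abs, hζ n, mul_one, abs_of_pos hr.1]
        exact hr.2
      · have h1 : ζ n - ((r:ℝ):ℂ)*ζ n = ((1-r:ℝ):ℂ) * ζ n := by push_cast; ring
        rw [h1, norm_mul, Complex.norm_real, Real.norm_eq_abs, hζ n, mul_one, norm_mul, Complex.norm_real, Real.norm_eq_abs,
          hζ n, mul_one, abs_of_pos hr.1, abs_of_pos (by linarith [hr.2] : (0:ℝ) < 1 - r)]
        linarith [hr.2]
  -- radial limit of f z / (z - ζ n)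
  have hfrad : ∀ n, Tendsto (fun r : ℝ => f (((r:ℝ):ℂ)*ζ n) / (((r:ℝ):ℂ)*ζ n - ζ n)) l
      (nhds ((m n : ℝ):ℂ)) := by
    intro n
    have h1 := (hder n 2 one_lt_two).comp (hpath n)
    exact h1
  -- limit of prefactor
  have hcval : ∀ n, (ζ n - a) * (1 - (starRingEnd ℂ) a * ζ n) = ζ n * ((normSq (ζ n - a) : ℝ):ℂ) := by
    intro n
    have h1 : ζ n * (starRingEnd ℂ) (ζ n) = 1 := by
      rw [Complex.mul_conj, hζsq n]; simp
    rw [← Complex.mul_conj (ζ n - a), map_sub]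
    linear_combination (a - ζ n) * h1
  have hclim : ∀ n, Tendsto (fun r : ℝ => (((r:ℝ):ℂ)*ζ n - a) * (1 - (starRingEnd ℂ) a * (((r:ℝ):ℂ)*ζ n)))
      l (nhds (ζ n * ((normSq (ζ n - a) : ℝ):ℂ))) := by
    intro n
    rw [← hcval n]
    have hc : Continuous (fun w : ℂ => (w - a) * (1 - (starRingEnd ℂ) a * w)) := by
      continuity
    have h2 : Tendsto (fun r : ℝ => ((r:ℝ):ℂ)*ζ n) l (nhds (ζ n)) := by
      have := hrC.mul_const (ζ n); simpa using this
    exact (hc.tendsto _).comp h2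
  have hcne : ∀ n, ζ n * ((normSq (ζ n - a) : ℝ):ℂ) ≠ 0 := by
    intro n
    apply mul_ne_zero (hζ0 n)
    exact_mod_cast (hnsa n).ne'
  set lam : Fin N → ℂ := fun n => ((m n : ℝ):ℂ) / (ζ n * ((normSq (ζ n - a) : ℝ):ℂ)) with hlam
  have hlamne : ∀ n, lam n ≠ 0 := by
    intro n
    apply div_ne_zero _ (hcne n)
    exact_mod_cast (hm n).ne
  -- radial limit of p z/(z - ζ n)
  have hprad : ∀ n, Tendsto (fun r : ℝ => p (((r:ℝ):ℂ)*ζ n) / (((r:ℝ):ℂ)*ζ n - ζ n)) l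
      (nhds (lam n)) := by
    intro n
    have hdiv := (hfrad n).div (hclim n) (hcne n)
    apply Tendsto.congr' _ hdiv
    filter_upwards [(hclim n).eventually_ne (hcne n)] with r hcr
    simp only [Pi.div_apply]
    rw [hf (((r:ℝ):ℂ)*ζ n)]
    rw [mul_div_assoc, mul_div_assoc]
    rw [mul_comm, div_mul_cancel₀ _ hcr]
  -- strict positivity of Re p
  set n0 : Fin N := ⟨0, hN⟩ with hn0
  have hmem0 : ∀ᶠ r in l, ((r:ℝ):ℂ)*ζ n0 ∈ ball (0:ℂ) 1 := by
    filter_upwards [IooMem] with r hr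
    rw [memBall_iff_normSq, normSq_mul, normSq_ofReal, hζsq n0, mul_one]
    nlinarith [hr.1, hr.2]
  have hp0 : ∀ z ∈ ball (0:ℂ) 1, 0 < (p z).re := by
    by_contra hcon
    push_neg at hcon
    obtain ⟨z0, hz0, hle⟩ := hcon
    have hre0 : (p z0).re = 0 := le_antisymm hle (hre z0 hz0)
    have hconst := constOfReZero p hp hre z0 hz0 hre0
    set κ := p z0 with hκ
    have hev : ∀ᶠ r in l, p (((r:ℝ):ℂ)*ζ n0) / (((r:ℝ):ℂ)*ζ n0 - ζ n0)
        = κ / ((((r:ℝ):ℂ) - 1) * ζ n0) := by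
      filter_upwards [hmem0] with r hr
      rw [hconst _ hr]
      congr 1
      ring
    by_cases hκ0 : κ = 0
    · have h1 : Tendsto (fun r : ℝ => p (((r:ℝ):ℂ)*ζ n0) / (((r:ℝ):ℂ)*ζ n0 - ζ n0)) l
          (nhds 0) := by
        apply Tendsto.congr' _ tendsto_const_nhds
        filter_upwards [hev] with r hr
        rw [hr, hκ0, zero_div]
      exact hlamne n0 (tendsto_nhds_unique (hprad n0) h1)
    · -- |κ|/(1-r) blows up, contradiction with finite limit
      set A : ℝ := ‖lam n0‖ + 1 with hA
      have hA0 : 0 < A := by positivity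
      have hκa : 0 < ‖κ‖ := norm_pos_iff.mpr hκ0
      have hlt : ‖lam n0‖ < A := by rw [hA]; linarith
      have habs : ∀ᶠ r in l,
          ‖p (((r:ℝ):ℂ)*ζ n0) / (((r:ℝ):ℂ)*ζ n0 - ζ n0)‖ < A := by
        have hcomp := (continuous_norm.tendsto _).comp (hprad n0)
        exact hcomp.eventually_lt_const hlt
      have hbig : ∀ᶠ r in l, 1 - ‖κ‖ / A < r := by
        apply eventually_nhdsWithin_of_eventually_nhds
        exact eventually_gt_nhds (by have := div_pos hκa hA0; linarith)
      have : ∀ᶠ r in l, False := by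
        filter_upwards [habs, hbig, hev, IooMem] with r h1 h2 h3 hr
        rw [h3] at h1
        rw [norm_div, norm_mul] at h1
        have he1 : ‖((r:ℝ):ℂ) - 1‖ = 1 - r := by
          rw [show ((r:ℝ):ℂ) - 1 = (((r - 1:ℝ)):ℂ) by push_cast; ring, Complex.norm_real, Real.norm_eq_abs]
          rw [abs_of_neg (by linarith [hr.2])]; ring
        rw [he1, hζ n0, mul_one] at h1
        rw [div_lt_iff₀ (by linarith [hr.2] : (0:ℝ) < 1 - r)] at h1
        rw [sub_lt_iff_lt_add] at h2
        have h4 : 1 - r < ‖κ‖ / A := by linarith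
        rw [lt_div_iff₀ hA0] at h4
        nlinarith
      obtain ⟨r, hr⟩ := this.exists
      exact hr
  have hpne : ∀ z ∈ ball (0:ℂ) 1, p z ≠ 0 := by
    intro z hz h
    have := hp0 z hz
    rw [h] at this
    simp at this
  set P : ℂ → ℂ := fun x => (p x)⁻¹ with hP
  have hPd : DifferentiableOn ℂ P (ball (0:ℂ) 1) := hp.inv hpne
  have hPre : ∀ x ∈ ball (0:ℂ) 1, 0 < (P x).re := by
    intro x hx
    rw [hP]
    simp only [Complex.inv_re]
    exact div_pos (hp0 x hx) (normSq_pos.2 (hpne x hx))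
  set σn : Fin N → ℝ := fun n => -(normSq (ζ n - a)) / (2 * m n) with hσn
  have hσpos : ∀ n, 0 < σn n := by
    intro n
    rw [hσn]
    apply div_pos_of_neg_of_neg
    · simpa using (hnsa n)
    · linarith [hm n]
  have hmC : ∀ n, ((m n : ℝ):ℂ) ≠ 0 := fun n => by exact_mod_cast (hm n).ne
  have hnsC : ∀ n, ((normSq (ζ n - a) : ℝ):ℂ) ≠ 0 := fun n => by exact_mod_cast (hnsa n).ne'
  have hPrad : ∀ n, Tendsto (fun r : ℝ => ((1 - (r:ℝ) : ℂ)/(1 + (r:ℝ))) * P (((r:ℝ):ℂ)*ζ n)) l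
      (nhds ((σn n : ℝ):ℂ)) := by
    intro n
    have hinv := (hprad n).inv₀ (hlamne n)
    have hs : Tendsto (fun r : ℝ => (-1 : ℂ)/(((1:ℂ)+((r:ℝ):ℂ))*ζ n)) l
        (nhds ((-1 : ℂ)/(2 * ζ n))) :=
      tendsto_const_nhds.div (honel.mul_const (ζ n)) (mul_ne_zero two_ne_zero (hζ0 n))
    have hmul := hinv.mul hs
    have heq : (fun r : ℝ => (p (((r:ℝ):ℂ)*ζ n) / (((r:ℝ):ℂ)*ζ n - ζ n))⁻¹
        * ((-1 : ℂ)/(((1:ℂ)+((r:ℝ):ℂ))*ζ n)))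
        =ᶠ[l] (fun r : ℝ => ((1 - (r:ℝ) : ℂ)/(1 + (r:ℝ))) * P (((r:ℝ):ℂ)*ζ n)) := by
      filter_upwards [IooMem] with r hr
      have hb : ((r:ℝ):ℂ)*ζ n ∈ ball (0:ℂ) 1 := by
        rw [memBall_iff_normSq, normSq_mul, normSq_ofReal, hζsq n, mul_one]
        nlinarith [hr.1, hr.2]
      have hpz := hpne _ hb
      have h1r : (1:ℂ) + ((r:ℝ):ℂ) ≠ 0 := by
        rw [show (1:ℂ)+((r:ℝ):ℂ) = (((1+r:ℝ)):ℂ) by push_cast; ring]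
        simp only [ne_eq, Complex.ofReal_eq_zero]
        nlinarith [hr.1]
      have hd : ((r:ℝ):ℂ)*ζ n - ζ n ≠ 0 := by
        rw [show ((r:ℝ):ℂ)*ζ n - ζ n = (((r - 1:ℝ)):ℂ)*ζ n by push_cast; ring]
        apply mul_ne_zero _ (hζ0 n)
        simp only [ne_eq, Complex.ofReal_eq_zero]
        nlinarith [hr.2]
      rw [inv_div, hP]
      field_simp [hpz, h1r, hζ0 n, hd]
      ring
    have hval : (lam n)⁻¹ * ((-1 : ℂ)/(2 * ζ n)) = ((σn n : ℝ):ℂ) := by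
      rw [hlam, hσn]
      simp only
      rw [inv_div]
      push_cast
      field_simp [hζ0 n, hmC n, hnsC n]
    rw [← hval]
    exact Tendsto.congr' heq hmul
  set Qf : Finset (Fin N) → ℂ → ℂ :=
    fun s z => P z - ∑ k ∈ s, ((σn k : ℝ):ℂ) * ((ζ k + z)/(ζ k - z)) with hQf
  have hQfd : ∀ s : Finset (Fin N), DifferentiableOn ℂ (Qf s) (ball (0:ℂ) 1) := by
    intro s
    apply hPd.sub
    apply DifferentiableOn.fun_sum
    intro k _
    apply DifferentiableOn.const_mul
    exact DifferentiableOn.div ((differentiable_const _).differentiableOn.add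
      differentiable_id.differentiableOn)
      ((differentiable_const _).differentiableOn.sub differentiable_id.differentiableOn)
      (fun z hz => unitSubNe (hζ k) hz)
  have hfrac : Tendsto (fun r : ℝ => (1 - (r:ℝ) : ℂ)/(1 + (r:ℝ))) l (nhds 0) := by
    have h1 := ((tendsto_const_nhds (x := (1:ℂ))).sub hrC).div honel two_ne_zero
    norm_num at h1
    exact h1
  have hQfrad : ∀ (s : Finset (Fin N)) (n : Fin N), n ∉ s →
      Tendsto (fun r : ℝ => ((1 - (r:ℝ) : ℂ)/(1 + (r:ℝ))) * Qf s (((r:ℝ):ℂ)*ζ n)) l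
        (nhds ((σn n : ℝ):ℂ)) := by
    intro s n hns
    have hterm : ∀ k ∈ s, Tendsto (fun r : ℝ => ((1 - (r:ℝ) : ℂ)/(1 + (r:ℝ)))
        * (((σn k : ℝ):ℂ) * ((ζ k + ((r:ℝ):ℂ)*ζ n)/(ζ k - ((r:ℝ):ℂ)*ζ n)))) l (nhds 0) := by
      intro k hk
      have hkn : ζ k - ζ n ≠ 0 := by
        rw [sub_ne_zero]
        intro h
        exact hns (hinj h ▸ hk)
      have hKlim : Tendsto (fun r : ℝ => (ζ k + ((r:ℝ):ℂ)*ζ n)/(ζ k - ((r:ℝ):ℂ)*ζ n)) l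
          (nhds ((ζ k + ζ n)/(ζ k - ζ n))) := by
        apply Tendsto.div
        · have := (tendsto_const_nhds (x := ζ k)).add (hrC.mul_const (ζ n))
          simpa using this
        · have := (tendsto_const_nhds (x := ζ k)).sub (hrC.mul_const (ζ n))
          simpa using this
        · exact hkn
      have := hfrac.mul ((tendsto_const_nhds (x := ((σn k : ℝ):ℂ))).mul hKlim)
      simpa using this
    have hsum := tendsto_finset_sum s hterm
    simp only [Finset.sum_const_zero] at hsum
    have hcomb := (hPrad n).sub hsum
    rw [sub_zero] at hcomb
    apply Tendsto.congr _ hcomb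
    intro r
    rw [hQf]
    simp only [mul_sub, Finset.mul_sum]
  have hQfre : ∀ s : Finset (Fin N), ∀ z ∈ ball (0:ℂ) 1, 0 ≤ (Qf s z).re := by
    intro s
    induction s using Finset.induction_on with
    | empty =>
      intro z hz
      have : Qf ∅ z = P z := by rw [hQf]; simp
      rw [this]
      exact (hPre z hz).le
    | @insert n s hns ih =>
      by_cases hex : ∃ z0 ∈ ball (0:ℂ) 1, (Qf s z0).re = 0
      · exfalso
        obtain ⟨z0, hz0, h0⟩ := hex
        have hc := constOfReZero (Qf s) (hQfd s) ih z0 hz0 h0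
        have h1 : Tendsto (fun r : ℝ => ((1 - (r:ℝ) : ℂ)/(1 + (r:ℝ))) * Qf s (((r:ℝ):ℂ)*ζ n)) l
            (nhds 0) := by
          have h2 := hfrac.mul_const (Qf s z0)
          rw [zero_mul] at h2
          apply Tendsto.congr' _ h2
          filter_upwards [IooMem] with r hr
          have hb : ((r:ℝ):ℂ)*ζ n ∈ ball (0:ℂ) 1 := by
            rw [memBall_iff_normSq, normSq_mul, normSq_ofReal, hζsq n, mul_one]
            nlinarith [hr.1, hr.2]
          rw [hc _ hb]
        have h2 := hQfrad s n hns
        have h3 := tendsto_nhds_unique h2 h1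
        exact (hσpos n).ne' (by exact_mod_cast h3)
      · push_neg at hex
        have hstrict : ∀ z ∈ ball (0:ℂ) 1, 0 < (Qf s z).re :=
          fun z hz => lt_of_le_of_ne (ih z hz) (Ne.symm (hex z hz))
        intro z hz
        have hj := juliaRHP (Qf s) (hQfd s) hstrict (ζ n) (hζsq n) (σn n) (hσpos n)
          (hQfrad s n hns) hz
        have hsubne := unitSubNe (hζ n) hz
        have hnsq := normSq_pos.2 hsubne
        have hKre : ((((σn n : ℝ)):ℂ) * ((ζ n + z)/(ζ n - z))).re
            = σn n * ((1 - normSq z)/normSq (ζ n - z)) := by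
          rw [Complex.re_ofReal_mul, reK _ _ (hζsq n)]
        have hQins : Qf (insert n s) z = Qf s z - (((σn n : ℝ)):ℂ) * ((ζ n + z)/(ζ n - z)) := by
          rw [hQf]
          simp only
          rw [Finset.sum_insert hns]
          ring
        rw [hQins, Complex.sub_re, hKre, sub_nonneg, ← mul_div_assoc, div_le_iff₀ hnsq]
        linarith [hj]
  have hσC : ∀ n, ((σn n : ℝ):ℂ) ≠ 0 := fun n => by exact_mod_cast (hσpos n).ne'
  set R : Fin N → ℂ → ℂ := fun n z => (ζ n - z)/(((σn n : ℝ):ℂ)*(ζ n + z)) with hRdef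
  have hmob : ∀ n, ∃ α β γ δ : ℂ, α * δ - β * γ ≠ 0 ∧ γ * ζ n + δ ≠ 0 ∧
      (∀ z, R n z = (α * z + β) / (γ * z + δ)) ∧ R n (ζ n) = 0 := by
    intro n
    refine ⟨-1, ζ n, ((σn n : ℝ):ℂ), ((σn n : ℝ):ℂ) * ζ n, ?_, ?_, ?_, ?_⟩
    · have h2 : (-1 : ℂ) * (((σn n : ℝ):ℂ) * ζ n) - ζ n * ((σn n : ℝ):ℂ)
          = -(2*(((σn n : ℝ):ℂ))*ζ n) := by ring
      rw [h2, neg_ne_zero]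
      exact mul_ne_zero (mul_ne_zero two_ne_zero (hσC n)) (hζ0 n)
    · have h2 : ((σn n : ℝ):ℂ) * ζ n + ((σn n : ℝ):ℂ) * ζ n = 2*(((σn n : ℝ):ℂ) * ζ n) := by
        ring
      rw [h2]
      exact mul_ne_zero two_ne_zero (mul_ne_zero (hσC n) (hζ0 n))
    · intro z
      rw [hRdef]
      congr 1 <;> ring
    · rw [hRdef]
      simp
  have hbij : ∀ n, Set.BijOn (R n) (ball (0:ℂ) 1) {w : ℂ | 0 < w.re} := by
    intro n
    rw [hRdef]
    exact mobiusBij (ζ n) (hζ n) (σn n) (hσpos n)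
  have hPsum : ∀ z, (p z)⁻¹ = (∑ n, ((σn n : ℝ):ℂ) * ((ζ n + z)/(ζ n - z))) + Qf Finset.univ z := by
    intro z
    rw [hQf]
    simp only [hP]
    ring
  by_cases hex : ∃ z0 ∈ ball (0:ℂ) 1, Qf Finset.univ z0 = 0
  · -- degenerate case : Q ≡ 0
    obtain ⟨z0, hz0, h0⟩ := hex
    have h0re : (Qf Finset.univ z0).re = 0 := by rw [h0]; simp
    have hall : ∀ z ∈ ball (0:ℂ) 1, Qf Finset.univ z = 0 := by
      intro z hz
      rw [constOfReZero (Qf Finset.univ) (hQfd Finset.univ) (hQfre Finset.univ) z0 hz0 h0re z hz,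
        h0]
    refine ⟨0, R, fun _ => 1, le_refl 0, hmob, hbij,
      (differentiable_const _).differentiableOn, fun z _ => by norm_num, ?_⟩
    intro z hz hfz hRne hqne
    have hcz : (z - a) * (1 - (starRingEnd ℂ) a * z) ≠ 0 := by
      intro h
      exact hfz (by rw [hf z, h, zero_mul])
    have hpz := hpne z hz
    have hRval : ∀ n, 1 / ((z - a) * (1 - (starRingEnd ℂ) a * z) * R n z)
        = ((σn n : ℝ):ℂ) * ((ζ n + z)/(ζ n - z)) / ((z - a) * (1 - (starRingEnd ℂ) a * z)) := by
      intro n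
      rw [hRdef]
      field_simp [hσC n, unitSubNe (hζ n) hz, unitAddNe (hζ n) hz]
    rw [Finset.sum_congr rfl fun n _ => hRval n, ← Finset.sum_div, hf z]
    rw [one_div, mul_inv, mul_comm, ← div_eq_mul_inv]
    have h5 := hPsum z
    rw [hall z hz, add_zero] at h5
    rw [← h5]
    push_cast
    rw [zero_div, add_zero]
  · push_neg at hex
    refine ⟨1, R, fun z => (Qf Finset.univ z)⁻¹, zero_le_one, hmob, hbij,
      (hQfd Finset.univ).inv hex, ?_, ?_⟩
    · intro z hz
      rw [Complex.inv_re]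
      exact div_nonneg (hQfre Finset.univ z hz) (normSq_nonneg _)
    intro z hz hfz hRne hqne
    have hcz : (z - a) * (1 - (starRingEnd ℂ) a * z) ≠ 0 := by
      intro h
      exact hfz (by rw [hf z, h, zero_mul])
    have hpz := hpne z hz
    have hRval : ∀ n, 1 / ((z - a) * (1 - (starRingEnd ℂ) a * z) * R n z)
        = ((σn n : ℝ):ℂ) * ((ζ n + z)/(ζ n - z)) / ((z - a) * (1 - (starRingEnd ℂ) a * z)) := by
      intro n
      rw [hRdef]
      field_simp [hσC n, unitSubNe (hζ n) hz, unitAddNe (hζ n) hz]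
    rw [Finset.sum_congr rfl fun n _ => hRval n, ← Finset.sum_div, hf z]
    rw [one_div, mul_inv, mul_comm, ← div_eq_mul_inv]
    push_cast
    rw [one_div, mul_inv, inv_inv, mul_comm, inv_mul_eq_div, ← add_div, ← hPsum z]
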